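/- Let w = w_0 w_1 ... w_{n-1} be a word over {2,3} of height 2h. Then w is a rop-word if and only if (i) n is odd, say n = 2ℓ+1, and (ii) for every rotation of w, the height of its prefix of length ℓ equals h−2 or h−1. -/

import Mathlib

namespace RopAux

def S (w : List ℕ) (k m : ℕ) : ℕ := ((w.rotate k).take m).sum

lemma sum_rotate (w : List ℕ) (k : ℕ) : (w.rotate k).sum = w.sum :=
  (w.rotate_perm k).sum_eq

lemma S_mono (w : List ℕ) (k : ℕ) {m m' : ℕ} (hm : m ≤ m') : S w k m ≤ S w k m' := by
  have h1 : (w.rotate k).take m' = (w.rotate k).take m ++ ((w.rotate k).drop m).take (m' - m) := by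
    rw [← List.take_add]; congr 1; omega
  unfold S; rw [h1, List.sum_append]; omega

lemma S_full (w : List ℕ) (k : ℕ) {m : ℕ} (hm : w.length ≤ m) : S w k m = w.sum := by
  unfold S
  rw [List.take_of_length_le (by rw [List.length_rotate]; exact hm), sum_rotate]

lemma S_succ (w : List ℕ) (hw : ∀ a ∈ w, a = 2 ∨ a = 3) (k : ℕ) {m : ℕ}
    (hm : m < w.length) : ∃ c, 2 ≤ c ∧ c ≤ 3 ∧ S w k (m + 1) = S w k m + c := by
  have hm' : m < (w.rotate k).length := by rw [List.length_rotate]; exact hm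
  have hmem : (w.rotate k).get ⟨m, hm'⟩ ∈ w :=
    (w.rotate_perm k).mem_iff.mp (List.get_mem _ _)
  refine ⟨(w.rotate k).get ⟨m, hm'⟩, ?_, ?_, List.sum_take_succ _ _ _⟩ <;>
    rcases hw _ hmem with h | h <;> omega

lemma S_add (w : List ℕ) (k : ℕ) {a b : ℕ} (hab : a + b ≤ w.length) :
    S w k (a + b) = S w k a + S w (k + a) b := by
  have ha : a ≤ (w.rotate k).length := by rw [List.length_rotate]; omega
  have h1 : w.rotate (k + a) = (w.rotate k).drop a ++ (w.rotate k).take a := by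
    rw [← List.rotate_rotate, List.rotate_eq_drop_append_take ha]
  unfold S
  rw [List.take_add, List.sum_append, h1]
  congr 2
  rw [List.take_append_of_le_length]
  rw [List.length_drop, List.length_rotate]; omega

lemma S_period (w : List ℕ) (k m : ℕ) : S w (k + w.length) m = S w k m := by
  unfold S
  rw [← List.rotate_rotate, ← List.length_rotate w k, List.rotate_length]

end RopAux

/-- Height of a word is the sum of its letters. A rop-word over {2,3}: even height and
no cyclic rotation factors as `u ++ v` with equal heights (empty parts allowed). -/
def IsRopWord (w : List ℕ) : Prop :=
  (∀ a ∈ w, a = 2 ∨ a = 3) ∧ Even w.sum ∧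
  ∀ (k : ℕ) (u v : List ℕ), w.rotate k = u ++ v → u.sum ≠ v.sum

/-- Bouchet: a word over {2,3} of height `2*h` is a rop-word iff its length is odd,
say `2*ℓ+1`, and the prefix of length `ℓ` of every rotation has height `h-2` or `h-1`. -/
theorem stmt_5 (w : List ℕ) (hw : ∀ a ∈ w, a = 2 ∨ a = 3) (h : ℕ) (hh : w.sum = 2 * h) :
    IsRopWord w ↔
      ∃ ℓ : ℕ, w.length = 2 * ℓ + 1 ∧
        ∀ k : ℕ, ((w.rotate k).take ℓ).sum = h - 2 ∨ ((w.rotate k).take ℓ).sum = h - 1 := by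
  open RopAux in
  set n := w.length with hn
  constructor
  · rintro ⟨-, -, hrop⟩
    have hne : w ≠ [] := by
      intro hnil
      exact hrop 0 [] [] (by simp [hnil]) rfl
    have h1 : 1 ≤ h := by
      rcases w with _ | ⟨a, t⟩
      · exact absurd rfl hne
      · rcases hw a (by simp) with ha | ha <;> simp [ha] at hh <;> omega
    have hn1 : 1 ≤ n := by
      rcases w with _ | ⟨a, t⟩
      · exact absurd rfl hne
      · simp [hn]
    have avoid : ∀ k m, S w k m ≠ h := by
      intro k m hS
      have hsplit : w.rotate k = (w.rotate k).take m ++ (w.rotate k).drop m :=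
        (List.take_append_drop m _).symm
      have hsum : ((w.rotate k).take m).sum + ((w.rotate k).drop m).sum = 2 * h := by
        rw [← List.sum_append, List.take_append_drop, sum_rotate, hh]
      unfold S at hS
      exact hrop k _ _ hsplit (by omega)
    have hfull : ∀ k m, n ≤ m → S w k m = 2 * h := by
      intro k m hm; rw [S_full w k hm, hh]
    have hPex : ∀ k : ℕ, ∃ m, h < S w k (m + 1) := by
      intro k
      exact ⟨n, by rw [hfull k (n + 1) (by omega)]; omega⟩
    set mk : ℕ → ℕ := fun k => Nat.find (hPex k) with hmk
    have mk_spec : ∀ k, h < S w k (mk k + 1) := by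
      intro k; simp only [hmk]; exact Nat.find_spec (hPex k)
    have mk_min : ∀ k b, h < S w k (b + 1) → mk k ≤ b := by
      intro k b hb; simp only [hmk]; exact Nat.find_min' (hPex k) hb
    have mk_notlt : ∀ k b, b < mk k → ¬ h < S w k (b + 1) := by
      intro k b hb; exact Nat.find_min (hPex k) (by simpa [hmk] using hb)
    have mk_le : ∀ k, mk k ≤ n := by
      intro k
      exact mk_min k n (by rw [hfull k (n + 1) (by omega)]; omega)
    have mk_lt_h : ∀ k, S w k (mk k) < h := by
      intro k
      rcases Nat.eq_zero_or_pos (mk k) with h0 | h0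
      · rw [h0]; simp only [S, List.take_zero, List.sum_nil]; omega
      · have hmin := mk_notlt k (mk k - 1) (by omega)
        have : mk k - 1 + 1 = mk k := by omega
        rw [this] at hmin
        have := avoid k (mk k)
        omega
    have mk_lt_n : ∀ k, mk k < n := by
      intro k
      rcases Nat.lt_or_ge (mk k) n with h' | h'
      · exact h'
      · have := mk_lt_h k
        rw [hfull k (mk k) h'] at this
        omega
    have crossing : ∀ k b, S w k b < h → h < S w k (b + 1) → mk k = b := by
      intro k b hb1 hb2
      have hle : mk k ≤ b := mk_min k b hb2
      rcases Nat.lt_or_ge (mk k) b with hlt | hge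
      · have := mk_spec k
        have hmono := S_mono w k (show mk k + 1 ≤ b by omega)
        omega
      · omega
    have mk_bound : ∀ k, h ≤ S w k (mk k) + 2 := by
      intro k
      obtain ⟨c, hc2, hc3, hc⟩ := S_succ w hw k (mk_lt_n k)
      have := mk_spec k
      omega
    have key : ∀ k, mk (k + (mk k + 1)) = n - (mk k + 1) := by
      intro k
      have hltn := mk_lt_n k
      have hab : (mk k + 1) + (n - (mk k + 1)) = n := by omega
      have e1 : S w k (mk k + 1) + S w (k + (mk k + 1)) (n - (mk k + 1)) = 2 * h := by
        have h' := S_add w k (a := mk k + 1) (b := n - (mk k + 1)) (by omega)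
        rw [hab, hfull k n le_rfl] at h'
        omega
      have e2 : h < S w k (mk k + 1) := mk_spec k
      have e3 : S w k (mk k + 1) ≤ h + 2 := by
        obtain ⟨c, hc2, hc3, hc⟩ := S_succ w hw k (mk_lt_n k)
        have := mk_lt_h k
        omega
      obtain ⟨c, hc2, hc3, hc⟩ :=
        S_succ w hw (k + (mk k + 1)) (show n - (mk k + 1) < n by omega)
      have hav := avoid (k + (mk k + 1)) (n - (mk k + 1) + 1)
      exact crossing (k + (mk k + 1)) (n - (mk k + 1)) (by omega) (by omega)
    have periodic : ∀ k, mk (k + n) = mk k := by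
      intro k
      refine crossing (k + n) (mk k) ?_ ?_
      · rw [hn, S_period]; exact mk_lt_h k
      · rw [hn, S_period]; exact mk_spec k
    have const : ∀ k, mk (k + 1) = mk k := by
      intro k
      have k1 := key k
      have k2 := key (k + (mk k + 1))
      rw [k1] at k2
      have ha : mk k + 1 ≤ n := mk_lt_n k
      have harg : k + (mk k + 1) + (n - (mk k + 1) + 1) = k + 1 + n := by omega
      rw [harg, periodic] at k2
      have hb2 : n - (n - (mk k + 1) + 1) = mk k := by omega
      rw [hb2] at k2
      exact k2
    have constAll : ∀ k, mk k = mk 0 := by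
      intro k
      induction k with
      | zero => rfl
      | succ k ih => rw [const k]; exact ih
    have hodd : n = 2 * mk 0 + 1 := by
      have k0 := key 0
      rw [constAll (0 + (mk 0 + 1))] at k0
      have := mk_lt_n 0
      omega
    refine ⟨mk 0, hodd, ?_⟩
    intro k
    have hlt := mk_lt_h k
    have hbd := mk_bound k
    rw [constAll k] at hlt hbd
    have : S w k (mk 0) = h - 2 ∨ S w k (mk 0) = h - 1 := by omega
    exact this
  · rintro ⟨ℓ, hl, hpref⟩
    have hn1 : 1 ≤ n := by omega
    have hne : w ≠ [] := by
      intro hnil; rw [hnil] at hn; simp [hn] at hn1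
    have h1 : 1 ≤ h := by
      rcases w with _ | ⟨a, t⟩
      · exact absurd rfl hne
      · rcases hw a (by simp) with ha | ha <;> simp [ha] at hh <;> omega
    refine ⟨hw, ⟨h, by omega⟩, ?_⟩
    intro k u v huv heq
    have hlen : u.length + v.length = n := by
      rw [hn, ← List.length_rotate w k, huv, List.length_append]
    have hsum : u.sum + v.sum = 2 * h := by
      rw [← List.sum_append, ← huv, sum_rotate, hh]
    have huh : u.sum = h := by omega
    have hSu : S w k u.length = h := by
      unfold S; rw [huv, List.take_left]; exact huh
    have hlow : ∀ k', S w k' ℓ < h := by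
      intro k'
      rcases hpref k' with e | e <;>
        · rw [show ((w.rotate k').take ℓ).sum = S w k' ℓ from rfl] at e; omega
    rcases le_or_gt u.length ℓ with hm | hm
    · have := S_mono w k hm
      have := hlow k
      omega
    · have hb : n - u.length ≤ ℓ := by omega
      have hadd := S_add w k (a := u.length) (b := n - u.length) (by omega)
      rw [show u.length + (n - u.length) = n by omega] at hadd
      rw [S_full w k (le_of_eq hn.symm), hh, hSu] at hadd
      have hmono := S_mono w (k + u.length) hb
      have := hlow (k + u.length)
      omega
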